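/- Let P : [0,∞) → ℝ be continuously differentiable with P(0) = 0, P'(Z) > 0 for all Z ≥ 0, and (5/3)P(Z) − Z P'(Z) > 0 for all Z > 0, and let 𝒮 : (0,∞) → ℝ be differentiable with 𝒮'(Z) = −(3/2)·((5/3)P(Z) − Z P'(Z))/Z² and lim_{Z→∞} 𝒮(Z) = 0. Then 𝒮(Z) > 0 for every Z > 0, and, setting M₁ := sup_{Z∈[0,1]} P'(Z) (finite since P' is continuous), one has 𝒮(Z) ≤ 𝒮(1) + (5/2)·M₁·max(0, −log Z) for all Z ∈ (0,1]; in particular there exists c > 0 such that 0 ≤ 𝒮(Z) ≤ c·(1 + max(0, −log Z)) for all Z > 0. -/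

import Mathlib

open Set Filter Topology

/-- Under the hypotheses (w2), (w6) and the Third law (w7)
(`𝒮(Z) → 0` as `Z → ∞`), the entropy profile `𝒮` is positive on `(0,∞)`, satisfies
`𝒮 Z ≤ 𝒮 1 + (5/2) M₁ max(0, -log Z)` on `(0,1]` with `M₁ = sup_{[0,1]} P'`, and in
particular `0 ≤ 𝒮 Z ≤ c (1 + max(0, -log Z))` on `(0,∞)` for some `c > 0`. -/
theorem stmt2 (P S : ℝ → ℝ)
    (hP : ContDiffOn ℝ 1 P (Set.Ici 0))
    (hP0 : P 0 = 0)
    (hP' : ∀ Z : ℝ, 0 ≤ Z → 0 < derivWithin P (Set.Ici 0) Z)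
    (hPZ : ∀ Z : ℝ, 0 < Z → 0 < (5 / 3) * P Z - Z * derivWithin P (Set.Ici 0) Z)
    (hS : ∀ Z : ℝ, 0 < Z →
      HasDerivAt S (-(3 / 2) * ((5 / 3) * P Z - Z * derivWithin P (Set.Ici 0) Z) / Z ^ 2) Z)
    (hS0 : Tendsto S atTop (𝓝 0)) :
    (∀ Z : ℝ, 0 < Z → 0 < S Z) ∧
    (∀ Z : ℝ, 0 < Z → Z ≤ 1 →
      S Z ≤ S 1 + (5 / 2) * sSup ((fun Z => derivWithin P (Set.Ici 0) Z) '' Set.Icc 0 1) *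
        max 0 (-Real.log Z)) ∧
    ∃ c : ℝ, 0 < c ∧ ∀ Z : ℝ, 0 < Z →
      0 ≤ S Z ∧ S Z ≤ c * (1 + max 0 (-Real.log Z)) := by
  set D : ℝ → ℝ := fun Z => derivWithin P (Set.Ici 0) Z with hD
  set M₁ : ℝ := sSup (D '' Set.Icc 0 1) with hM
  -- continuity of D on Ici 0
  have hDcont : ContinuousOn D (Set.Ici 0) :=
    hP.continuousOn_derivWithin (uniqueDiffOn_Ici 0) le_rfl
  have hbdd : BddAbove (D '' Set.Icc 0 1) :=
    ((isCompact_Icc).image_of_continuousOn (hDcont.mono Icc_subset_Ici_self)).bddAbove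
  have hM1 : ∀ x ∈ Set.Icc (0:ℝ) 1, D x ≤ M₁ := fun x hx =>
    le_csSup hbdd (mem_image_of_mem _ hx)
  have hM1pos : 0 < M₁ := lt_of_lt_of_le (hP' 0 le_rfl) (hM1 0 ⟨le_rfl, zero_le_one⟩)
  -- P is differentiable at positive points with derivative D
  have hPd : ∀ x : ℝ, 0 < x → HasDerivAt P (D x) x := by
    intro x hx
    have hnhds : Set.Ici (0:ℝ) ∈ 𝓝 x := Ici_mem_nhds hx
    have := (hP.differentiableOn one_ne_zero x (le_of_lt hx)).differentiableAt hnhds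
    have hd : derivWithin P (Set.Ici 0) x = deriv P x := derivWithin_of_mem_nhds hnhds
    simpa [hD, hd] using this.hasDerivAt
  -- S is strictly antitone on Ioi 0
  have hSanti : StrictAntiOn S (Set.Ioi 0) := by
    apply strictAntiOn_of_deriv_neg (convex_Ioi 0)
    · intro x hx
      exact (hS x hx).continuousAt.continuousWithinAt
    · intro x hx
      rw [interior_Ioi] at hx
      rw [(hS x hx).deriv]
      apply div_neg_of_neg_of_pos
      · have := hPZ x hx
        nlinarith
      · have hx' : (0:ℝ) < x := hx
        positivity
  -- S nonneg on Ioi 0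
  have hSnn : ∀ Z : ℝ, 0 < Z → 0 ≤ S Z := by
    intro Z hZ
    refine le_of_tendsto hS0 ?_
    filter_upwards [eventually_ge_atTop Z] with W hW
    exact hSanti.antitoneOn (mem_Ioi.2 hZ) (mem_Ioi.2 (lt_of_lt_of_le hZ hW)) hW
  have hSpos : ∀ Z : ℝ, 0 < Z → 0 < S Z := by
    intro Z hZ
    have h1 : S (Z + 1) < S Z := hSanti (mem_Ioi.2 hZ) (by simp; linarith) (by linarith)
    have := hSnn (Z + 1) (by linarith)
    linarith
  -- P Z ≤ M₁ Z on [0,1]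
  have hPle : ∀ Z ∈ Set.Icc (0:ℝ) 1, P Z ≤ M₁ * Z := by
    have hmono : MonotoneOn (fun x => M₁ * x - P x) (Set.Icc 0 1) := by
      apply monotoneOn_of_deriv_nonneg (convex_Icc 0 1)
      · exact (continuous_const.mul continuous_id).continuousOn.sub
          (hP.continuousOn.mono Icc_subset_Ici_self)
      · intro x hx
        rw [interior_Icc] at hx
        exact (((hasDerivAt_id x).const_mul M₁).sub (hPd x hx.1)).differentiableAt.differentiableWithinAt
      · intro x hx
        rw [interior_Icc] at hx
        have hder : HasDerivAt (fun x => M₁ * x - P x) (M₁ * 1 - D x) x :=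
          ((hasDerivAt_id x).const_mul M₁).sub (hPd x hx.1)
        rw [hder.deriv]
        have := hM1 x ⟨le_of_lt hx.1, le_of_lt hx.2⟩
        linarith
    intro Z hZ
    have := hmono ⟨le_rfl, zero_le_one⟩ hZ hZ.1
    simp only [hP0, mul_zero, sub_zero] at this
    linarith
  -- the auxiliary function
  set h : ℝ → ℝ := fun z => S z + (5 / 2) * M₁ * Real.log z with hh
  have hmono : MonotoneOn h (Set.Ioc 0 1) := by
    apply monotoneOn_of_deriv_nonneg (convex_Ioc 0 1)
    · intro x hx
      exact (((hS x hx.1).continuousAt).add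
        ((Real.continuousAt_log (ne_of_gt hx.1)).const_mul _)).continuousWithinAt
    · intro x hx
      rw [interior_Ioc] at hx
      exact ((hS x hx.1).add
        (((Real.hasDerivAt_log (ne_of_gt hx.1)).const_mul _))).differentiableAt.differentiableWithinAt
    · intro x hx
      rw [interior_Ioc] at hx
      have hder : HasDerivAt h
          (-(3 / 2) * ((5 / 3) * P x - x * D x) / x ^ 2 + (5 / 2) * M₁ * x⁻¹) x :=
        (hS x hx.1).add (((Real.hasDerivAt_log (ne_of_gt hx.1)).const_mul _))
      rw [hder.deriv]
      have hx0 : (0:ℝ) < x := hx.1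
      have hA : (5 / 3) * P x - x * D x ≤ (5 / 3) * M₁ * x := by
        have h1 := hPle x ⟨le_of_lt hx.1, le_of_lt hx.2⟩
        have h2 : 0 < x * D x := mul_pos hx.1 (hP' x (le_of_lt hx.1))
        nlinarith
      have heq : -(3 / 2) * ((5 / 3) * P x - x * D x) / x ^ 2 + (5 / 2) * M₁ * x⁻¹
          = ((5 / 2) * M₁ * x - (3 / 2) * ((5 / 3) * P x - x * D x)) / x ^ 2 := by
        field_simp
        ring
      rw [heq]
      apply div_nonneg _ (by positivity)
      nlinarith
  have part2 : ∀ Z : ℝ, 0 < Z → Z ≤ 1 → S Z ≤ S 1 + (5 / 2) * M₁ * max 0 (-Real.log Z) := by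
    intro Z hZ hZ1
    have := hmono ⟨hZ, hZ1⟩ ⟨one_pos, le_rfl⟩ hZ1
    simp only [hh, Real.log_one, mul_zero, add_zero] at this
    have hlog : Real.log Z ≤ 0 := Real.log_nonpos (le_of_lt hZ) hZ1
    rw [max_eq_right (by linarith)]
    linarith
  refine ⟨hSpos, part2, ⟨S 1 + (5 / 2) * M₁, by nlinarith [hSpos 1 one_pos], ?_⟩⟩
  intro Z hZ
  refine ⟨hSnn Z hZ, ?_⟩
  have hm : 0 ≤ max 0 (-Real.log Z) := le_max_left _ _
  have hS1 := hSpos 1 one_pos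
  rcases le_or_gt Z 1 with hZ1 | hZ1
  · have := part2 Z hZ hZ1
    nlinarith
  · have h1 : S Z < S 1 := hSanti (mem_Ioi.2 one_pos) (mem_Ioi.2 hZ) hZ1
    nlinarith
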